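/- For all a, b > 0, one has the integral representation β₁(a,b) = (1/4) ∫_a^b (a·b/z)·(1/Λ(z,a) - 1/Λ(z,b)) dz. -/

import Mathlib

open Real

/-- The logarithmic mean `Λ(s,t)`. -/
noncomputable def logMean (s t : ℝ) : ℝ :=
  if s = t then s else (s - t) / (Real.log s - Real.log t)

/-- The harmonic-logarithmic mean `Λ_H(s,t) = st/Λ(s,t)`. -/
noncomputable def harmLogMean (s t : ℝ) : ℝ := s * t / logMean s t

/-- `α*₁(a,b,ξ) = ∫₀^ξ sinh(x) Λ_H(a e^{-x}, b e^{x}) dx`. -/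
noncomputable def alphaOne (a b ξ : ℝ) : ℝ :=
  ∫ x in (0:ℝ)..ξ, Real.sinh x * harmLogMean (a * Real.exp (-x)) (b * Real.exp x)

/-- `β₁(a,b) = α*₁(a, b, (1/2) log(a/b))`. -/
noncomputable def betaOne (a b : ℝ) : ℝ :=
  alphaOne a b ((1 / 2) * Real.log (a / b))

open Filter Set Topology

noncomputable def expSlope (c x : ℝ) : ℝ :=
  if x = c then Real.exp c else (Real.exp x - Real.exp c) / (x - c)

lemma expSlope_self (c : ℝ) : expSlope c c = Real.exp c := if_pos rfl

lemma expSlope_pos (c x : ℝ) : 0 < expSlope c x := by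
  unfold expSlope
  split_ifs with h
  · exact exp_pos c
  · rcases lt_or_gt_of_ne h with h1 | h1
    · have h2 := Real.exp_lt_exp.mpr h1
      apply div_pos_of_neg_of_neg <;> linarith
    · have h2 := Real.exp_lt_exp.mpr h1
      apply div_pos <;> linarith

lemma continuous_expSlope (c : ℝ) : Continuous (expSlope c) := by
  rw [continuous_iff_continuousAt]
  intro x
  rcases eq_or_ne x c with rfl | hx
  · have h := Real.hasDerivAt_exp x
    rw [hasDerivAt_iff_tendsto_slope] at h
    have h2 : Tendsto (expSlope x) (𝓝[≠] x) (𝓝 (Real.exp x)) := by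
      refine h.congr' ?_
      filter_upwards [self_mem_nhdsWithin] with y hy
      simp only [mem_compl_iff, mem_singleton_iff] at hy
      simp [expSlope, hy, slope_def_field]
    rw [ContinuousAt, expSlope_self, ← nhdsNE_sup_pure]
    refine Tendsto.sup h2 ?_
    have := tendsto_pure_nhds (expSlope x) x
    rwa [expSlope_self] at this
  · have hev : (fun y => (Real.exp y - Real.exp c) / (y - c)) =ᶠ[𝓝 x] expSlope c := by
      filter_upwards [isOpen_ne.mem_nhds hx] with y hy
      simp [expSlope, hy]
    refine ContinuousAt.congr ?_ hev
    exact (Real.continuous_exp.continuousAt.sub continuousAt_const).div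
      (continuousAt_id.sub continuousAt_const) (sub_ne_zero.mpr hx)

lemma expSlope_symm (c x : ℝ) : expSlope c x = expSlope x c := by
  unfold expSlope
  rcases eq_or_ne x c with rfl | h
  · simp
  · rw [if_neg h, if_neg (Ne.symm h), ← neg_sub (Real.exp c), ← neg_sub c x, neg_div_neg_eq]

lemma expSlope_shift (c x t : ℝ) : expSlope c x = Real.exp t * expSlope (c - t) (x - t) := by
  unfold expSlope
  rcases eq_or_ne x c with rfl | h
  · rw [if_pos rfl, if_pos rfl, ← Real.exp_add]
    ring_nf
  · have h' : x - t ≠ c - t := fun hh => h (by linarith)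
    rw [if_neg h, if_neg h']
    have h1 : x - t - (c - t) = x - c := by ring
    rw [h1, mul_div_assoc']
    congr 1
    rw [mul_sub, ← Real.exp_add, ← Real.exp_add]
    ring_nf

lemma expSlope_reflect (c x : ℝ) : Real.exp x * expSlope 0 (c - x) = expSlope c x := by
  rw [expSlope_shift c x x, sub_self, expSlope_symm]

lemma logMean_eq_expSlope {z c : ℝ} (hz : 0 < z) (hc : 0 < c) :
    logMean z c = expSlope (Real.log c) (Real.log z) := by
  unfold logMean expSlope
  rcases eq_or_ne z c with rfl | h
  · rw [if_pos rfl, if_pos rfl, Real.exp_log hz]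
  · have hl : Real.log z ≠ Real.log c := fun hh => h (by rw [← Real.exp_log hz, hh, Real.exp_log hc])
    rw [if_neg h, if_neg hl, Real.exp_log hz, Real.exp_log hc]

lemma continuousOn_inv_logMean {c : ℝ} (hc : 0 < c) :
    ContinuousOn (fun z => 1 / logMean z c) (Set.Ioi 0) := by
  have h : ∀ z ∈ Set.Ioi (0:ℝ), 1 / expSlope (Real.log c) (Real.log z) = 1 / logMean z c :=
    fun z hz => by rw [logMean_eq_expSlope hz hc]
  refine ContinuousOn.congr ?_ (fun z hz => (h z hz).symm)
  refine ContinuousOn.div continuousOn_const ?_ (fun z _ => (expSlope_pos _ _).ne')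
  exact (continuous_expSlope _).comp_continuousOn
    (Real.continuousOn_log.mono (fun z hz => Set.mem_compl_singleton_iff.mpr (ne_of_gt hz)))

/-- `β₁(a,b) = (1/4) ∫_a^b (ab/z)(1/Λ(z,a) - 1/Λ(z,b)) dz`. -/
theorem betaOne_integral_repr (a b : ℝ) (ha : 0 < a) (hb : 0 < b) :
    betaOne a b =
      (1 / 4) * ∫ z in a..b, a * b / z * (1 / logMean z a - 1 / logMean z b) := by
  unfold betaOne alphaOne
  set ξ : ℝ := (1 / 2) * Real.log (a / b) with hξdef
  have h2ξ : 2 * ξ = Real.log a - Real.log b := by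
    rw [hξdef, ← Real.log_div ha.ne' hb.ne']; ring
  have hba : b * Real.exp (2 * ξ) = a := by
    rw [h2ξ, Real.exp_sub, Real.exp_log ha, Real.exp_log hb]
    field_simp
  -- pointwise identity for the left integrand
  have I1 : ∀ x : ℝ, Real.sinh x * harmLogMean (a * Real.exp (-x)) (b * Real.exp x)
      = a * (Real.exp (2 * x) - 1) / (2 * expSlope (2 * ξ) (2 * x)) := by
    intro x
    have hlm : logMean (a * Real.exp (-x)) (b * Real.exp x)
        = b * Real.exp (-x) * expSlope (2 * ξ) (2 * x) := by
      rw [logMean_eq_expSlope (mul_pos ha (exp_pos _)) (mul_pos hb (exp_pos _)),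
        Real.log_mul ha.ne' (exp_pos _).ne', Real.log_mul hb.ne' (exp_pos _).ne',
        Real.log_exp, Real.log_exp, expSlope_symm,
        expSlope_shift (Real.log a + -x) (Real.log b + x) (Real.log b - x)]
      have e1 : Real.log a + -x - (Real.log b - x) = 2 * ξ := by rw [h2ξ]; ring
      have e2 : Real.log b + x - (Real.log b - x) = 2 * x := by ring
      rw [e1, e2, Real.exp_sub, Real.exp_log hb, Real.exp_neg]
      ring
    rw [harmLogMean, hlm, Real.sinh_eq]
    have hE := (expSlope_pos (2 * ξ) (2 * x)).ne'
    have hex := (Real.exp_pos x).ne'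
    have h2x : Real.exp (2 * x) = Real.exp x * Real.exp x := by
      rw [← Real.exp_add]; ring_nf
    rw [h2x]
    simp only [Real.exp_neg]
    field_simp
  -- pointwise identity for the substituted right integrand
  have I2 : ∀ x : ℝ, (b * (Real.exp (2 * x) * 2)) •
        ((fun z => a * b / z * (1 / logMean z a - 1 / logMean z b)) ∘
          (fun x => b * Real.exp (2 * x))) x
      = 2 * a * (1 / expSlope (2 * ξ) (2 * x)) - 2 * a * (1 / expSlope 0 (2 * x)) := by
    intro x
    have hz : (0:ℝ) < b * Real.exp (2 * x) := mul_pos hb (exp_pos _)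
    have l1 : logMean (b * Real.exp (2 * x)) a = b * expSlope (2 * ξ) (2 * x) := by
      rw [logMean_eq_expSlope hz ha, Real.log_mul hb.ne' (exp_pos _).ne', Real.log_exp,
        expSlope_shift (Real.log a) (Real.log b + 2 * x) (Real.log b), Real.exp_log hb]
      have e1 : Real.log a - Real.log b = 2 * ξ := h2ξ.symm
      have e2 : Real.log b + 2 * x - Real.log b = 2 * x := by ring
      rw [e1, e2]
    have l2 : logMean (b * Real.exp (2 * x)) b = b * expSlope 0 (2 * x) := by
      rw [logMean_eq_expSlope hz hb, Real.log_mul hb.ne' (exp_pos _).ne', Real.log_exp,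
        expSlope_shift (Real.log b) (Real.log b + 2 * x) (Real.log b), Real.exp_log hb, sub_self]
      have e2 : Real.log b + 2 * x - Real.log b = 2 * x := by ring
      rw [e2]
    simp only [Function.comp, smul_eq_mul]
    rw [l1, l2]
    have hE2 := (expSlope_pos (2 * ξ) (2 * x)).ne'
    have hE0 := (expSlope_pos 0 (2 * x)).ne'
    have hex := (Real.exp_pos (2 * x)).ne'
    field_simp
  -- the substitution z = b * exp (2 x)
  have hderiv : ∀ x ∈ Set.uIcc ξ (0:ℝ),
      HasDerivAt (fun x => b * Real.exp (2 * x)) (b * (Real.exp (2 * x) * 2)) x := by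
    intro x _
    have h1 : HasDerivAt (fun x : ℝ => 2 * x) 2 x := by
      simpa using (hasDerivAt_id x).const_mul 2
    exact (h1.exp).const_mul b
  have hcont' : ContinuousOn (fun x => b * (Real.exp (2 * x) * 2)) (Set.uIcc ξ 0) := by
    apply Continuous.continuousOn; continuity
  have himg : (fun x => b * Real.exp (2 * x)) '' Set.uIcc ξ 0 ⊆ Set.Ioi 0 := by
    rintro z ⟨x, -, rfl⟩
    exact mul_pos hb (exp_pos _)
  have hG : ContinuousOn (fun z => a * b / z * (1 / logMean z a - 1 / logMean z b))
      (Set.Ioi 0) := by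
    refine ContinuousOn.mul ?_ ((continuousOn_inv_logMean ha).sub (continuousOn_inv_logMean hb))
    exact continuousOn_const.div continuousOn_id (fun z hz => ne_of_gt hz)
  have hsub : (∫ x in ξ..(0:ℝ), (b * (Real.exp (2 * x) * 2)) •
        ((fun z => a * b / z * (1 / logMean z a - 1 / logMean z b)) ∘
          (fun x => b * Real.exp (2 * x))) x)
      = ∫ z in (b * Real.exp (2 * ξ))..(b * Real.exp (2 * 0)),
          a * b / z * (1 / logMean z a - 1 / logMean z b) :=
    intervalIntegral.integral_comp_smul_deriv' hderiv hcont' (hG.mono himg)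
  have hf0 : b * Real.exp (2 * (0:ℝ)) = b := by norm_num
  rw [hba, hf0] at hsub
  rw [← hsub, intervalIntegral.integral_symm (0:ℝ) ξ,
    intervalIntegral.integral_congr (g := fun x =>
      2 * a * (1 / expSlope (2 * ξ) (2 * x)) - 2 * a * (1 / expSlope 0 (2 * x)))
      (fun x _ => I2 x),
    intervalIntegral.integral_congr (g := fun x =>
      a * (Real.exp (2 * x) - 1) / (2 * expSlope (2 * ξ) (2 * x))) (fun x _ => I1 x)]
  -- now a purely `expSlope` statement
  have hcE : ∀ c : ℝ, Continuous fun x : ℝ => 2 * a * (1 / expSlope c (2 * x)) := by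
    intro c
    apply continuous_const.mul
    exact continuous_const.div ((continuous_expSlope c).comp (by continuity))
      (fun x => (expSlope_pos _ _).ne')
  have hi2 : IntervalIntegrable (fun x => 2 * a * (1 / expSlope (2 * ξ) (2 * x))) MeasureTheory.volume 0 ξ :=
    (hcE _).intervalIntegrable 0 ξ
  have hi3 : IntervalIntegrable (fun x => 2 * a * (1 / expSlope 0 (2 * x))) MeasureTheory.volume 0 ξ :=
    (hcE _).intervalIntegrable 0 ξ
  have hi4 : IntervalIntegrable (fun x => 2 * a * (1 / expSlope 0 (2 * (ξ - x)))) MeasureTheory.volume 0 ξ := by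
    apply Continuous.intervalIntegrable
    exact (hcE 0).comp (continuous_const.sub continuous_id)
  have I3 : ∀ x : ℝ, a * (Real.exp (2 * x) - 1) / (2 * expSlope (2 * ξ) (2 * x))
      = (1/4) * (2 * a * (1 / expSlope 0 (2 * (ξ - x))))
        - (1/4) * (2 * a * (1 / expSlope (2 * ξ) (2 * x))) := by
    intro x
    have e : 2 * (ξ - x) = 2 * ξ - 2 * x := by ring
    rw [e, ← expSlope_reflect (2 * ξ) (2 * x)]
    have hE0 := (expSlope_pos 0 (2 * ξ - 2 * x)).ne'
    have hex := (Real.exp_pos (2 * x)).ne'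
    field_simp
    ring
  rw [intervalIntegral.integral_congr (g := fun x =>
      (1/4) * (2 * a * (1 / expSlope 0 (2 * (ξ - x))))
        - (1/4) * (2 * a * (1 / expSlope (2 * ξ) (2 * x)))) (fun x _ => I3 x),
    intervalIntegral.integral_sub (hi4.const_mul _) (hi2.const_mul _),
    intervalIntegral.integral_sub hi2 hi3]
  have hrefl2 : (∫ x in (0:ℝ)..ξ, 1 / expSlope 0 (2 * (ξ - x)))
      = ∫ x in (0:ℝ)..ξ, 1 / expSlope 0 (2 * x) := by
    have h := intervalIntegral.integral_comp_sub_left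
      (a := (0:ℝ)) (b := ξ) (fun y => 1 / expSlope 0 (2 * y)) ξ
    simpa using h
  simp only [intervalIntegral.integral_const_mul]
  rw [hrefl2]
  ring
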